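/- arXiv:2401.10200 — 2 statements merged into one kernel-verified Lean document; each statement's English description precedes it below -/
import Mathlib

section
/- Let m ≥ 1, let S ⊆ 𝔽₂^m be a subspace and Δ ∈ 𝔽₂^m ∖ S; let S_Δ be the subspace spanned by S and Δ (so S_Δ = S ∪ (S+Δ)), let Ŝ := (S_Δ)⊥, and let Δ̂ be any vector in S⊥ ∖ Ŝ. Then for all α, β ∈ ℂ: H^{⊗m}(α|Ŝ⟩ + β|Ŝ+Δ̂⟩) = ((α+β)/√2)|S⟩ + ((α−β)/√2)|S+Δ⟩. Equivalently, H^{⊗m} ∘ E_{Ŝ,Δ̂} = E_{S,Δ} ∘ H, where H is the single-qubit Hadamard gate. -/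
/-!
Claim 3.2 / overview identity of "Quantum State Obfuscation from Classical Oracles":
the `m`-fold Hadamard maps dual coset states of `Ŝ = (S_Δ)⊥` to coset states of `S`,
implementing a logical Hadamard: `H^{⊗m} ∘ E_{Ŝ,Δ̂} = E_{S,Δ} ∘ H`.
-/

open scoped BigOperators

noncomputable section

attribute [local instance] Classical.propDecidable

abbrev Fvec (n : ℕ) : Type := Fin n → ZMod 2

abbrev QSpace (n : ℕ) : Type := EuclideanSpace ℂ (Fvec n)

/-- The ±1 lift of a bit: `+1` if `b = 0` and `−1` if `b = 1`. -/
def sgn (b : ZMod 2) : ℂ := if b = 0 then 1 else -1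

/-- The dot product over `𝔽₂`. -/
def dotp {n : ℕ} (x y : Fvec n) : ZMod 2 := ∑ i, x i * y i

/-- The orthogonal complement `T⊥ = {w : w·t = 0 for all t ∈ T}` with respect to the
`𝔽₂` dot product. -/
def dualSub {n : ℕ} (T : Submodule (ZMod 2) (Fvec n)) : Submodule (ZMod 2) (Fvec n) where
  carrier := {w | ∀ t ∈ T, dotp w t = 0}
  add_mem' := by
    intro a b ha hb t ht
    have h : dotp (a + b) t = dotp a t + dotp b t := by
      simp [dotp, add_mul, Finset.sum_add_distrib]
    rw [h, ha t ht, hb t ht, add_zero]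
  zero_mem' := by
    intro t ht
    simp [dotp]
  smul_mem' := by
    intro c a ha t ht
    have h : dotp (c • a) t = c * dotp a t := by
      simp [dotp, Finset.mul_sum, mul_assoc]
    rw [h, ha t ht, mul_zero]

/-- The normalized coset state `|T+a⟩ = |T|^{−1/2} ∑_{t ∈ T} |t+a⟩`
(note that `v = t + a` iff `v + a ∈ T`, as we are in characteristic two). -/
def cosetState {n : ℕ} (T : Submodule (ZMod 2) (Fvec n)) (a : Fvec n) : QSpace n :=
  WithLp.toLp 2 (fun v => if v + a ∈ T then ((Real.sqrt (Nat.card ↥T) : ℂ))⁻¹ else 0)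

/-- The subspace `S_Δ` spanned by `S` and `Δ`, i.e. `S ∪ (S + Δ)` when `Δ ∉ S`. -/
def extSpan {n : ℕ} (S : Submodule (ZMod 2) (Fvec n)) (Δ : Fvec n) :
    Submodule (ZMod 2) (Fvec n) :=
  S ⊔ Submodule.span (ZMod 2) {Δ}

/-- The `m`-qubit Hadamard `H^{⊗m}`, with matrix entries
`⟨u|H^{⊗m}|v⟩ = 2^{−m/2} (−1)^{u·v}`. -/
def Had {n : ℕ} (ψ : QSpace n) : QSpace n :=
  WithLp.toLp 2 (fun u => (Real.sqrt (2 ^ n) : ℂ)⁻¹ * ∑ v, sgn (dotp u v) * ψ v)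

lemma dotp_comm {n : ℕ} (x y : Fvec n) : dotp x y = dotp y x := by
  simp [dotp, mul_comm]

lemma dotp_add_right {n : ℕ} (x y z : Fvec n) : dotp x (y + z) = dotp x y + dotp x z := by
  simp [dotp, mul_add, Finset.sum_add_distrib]

lemma dotp_add_left {n : ℕ} (x y z : Fvec n) : dotp (x + y) z = dotp x z + dotp y z := by
  simp [dotp, add_mul, Finset.sum_add_distrib]

lemma dotp_smul_left {n : ℕ} (c : ZMod 2) (x y : Fvec n) : dotp (c • x) y = c * dotp x y := by
  simp [dotp, Finset.mul_sum, mul_assoc]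

lemma dotp_smul_right {n : ℕ} (c : ZMod 2) (x y : Fvec n) : dotp x (c • y) = c * dotp x y := by
  simp [dotp, Finset.mul_sum, mul_assoc, mul_comm, mul_left_comm]

lemma zmod2_cases (a : ZMod 2) : a = 0 ∨ a = 1 := by revert a; decide

lemma sgn_add (a b : ZMod 2) : sgn (a + b) = sgn a * sgn b := by
  rcases zmod2_cases a with ha | ha <;> rcases zmod2_cases b with hb | hb <;>
    subst ha <;> subst hb <;> simp [sgn, show (1 + 1 : ZMod 2) = 0 from rfl]

lemma dotp_single {n : ℕ} (x : Fvec n) (i : Fin n) : dotp x (Pi.single i 1) = x i := by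
  simp [dotp, Pi.single_apply, mul_ite, Finset.sum_ite_eq]

def dotpL {n : ℕ} : Fvec n →ₗ[ZMod 2] Module.Dual (ZMod 2) (Fvec n) :=
  LinearMap.mk₂ (ZMod 2) dotp dotp_add_left dotp_smul_left dotp_add_right dotp_smul_right

lemma dotpL_inj {n : ℕ} : Function.Injective (dotpL (n := n)) := by
  rw [injective_iff_map_eq_zero]
  intro x hx
  funext i
  have := congrArg (fun f => f (Pi.single i 1)) hx
  simpa [dotpL, dotp_single] using this






lemma mem_dualSub {n : ℕ} {T : Submodule (ZMod 2) (Fvec n)} {w : Fvec n} :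
    w ∈ dualSub T ↔ ∀ t ∈ T, dotp w t = 0 := Iff.rfl

def dotpEquiv (n : ℕ) : Fvec n ≃ₗ[ZMod 2] Module.Dual (ZMod 2) (Fvec n) :=
  LinearEquiv.ofBijective dotpL ⟨dotpL_inj, by
    rw [← LinearMap.injective_iff_surjective_of_finrank_eq_finrank]
    · exact dotpL_inj
    · rw [Subspace.dual_finrank_eq]⟩

lemma dualSub_eq_comap {n : ℕ} (T : Submodule (ZMod 2) (Fvec n)) :
    dualSub T = T.dualAnnihilator.comap (dotpEquiv n).toLinearMap := by
  ext w
  simp only [mem_dualSub, Submodule.mem_comap, Submodule.mem_dualAnnihilator]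
  rfl

lemma finrank_dualSub {n : ℕ} (T : Submodule (ZMod 2) (Fvec n)) :
    Module.finrank (ZMod 2) (dualSub T) + Module.finrank (ZMod 2) T = n := by
  rw [dualSub_eq_comap]
  have h1 : Module.finrank (ZMod 2) (T.dualAnnihilator.comap (dotpEquiv n).toLinearMap)
      = Module.finrank (ZMod 2) T.dualAnnihilator := by
    rw [Submodule.comap_equiv_eq_map_symm]
    exact (LinearEquiv.finrank_map_eq _ _)
  rw [h1]
  have h2 := Submodule.finrank_quotient_add_finrank T
  have h3 : Module.finrank (ZMod 2) (Fvec n ⧸ T) = Module.finrank (ZMod 2) T.dualAnnihilator :=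
    (Subspace.quotEquivAnnihilator T).finrank_eq
  have h4 : Module.finrank (ZMod 2) (Fvec n) = n := Module.finrank_fin_fun _
  omega

lemma dualSub_dualSub {n : ℕ} (T : Submodule (ZMod 2) (Fvec n)) :
    dualSub (dualSub T) = T := by
  have hle : T ≤ dualSub (dualSub T) := by
    intro t ht w hw
    rw [dotp_comm]
    exact hw t ht
  have h1 := finrank_dualSub T
  have h2 := finrank_dualSub (dualSub T)
  exact (Submodule.eq_of_le_of_finrank_le hle (by omega)).symm

lemma card_submodule {n : ℕ} (T : Submodule (ZMod 2) (Fvec n)) :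
    Nat.card ↥T = 2 ^ Module.finrank (ZMod 2) T := by
  letI : Fintype ↥T := Fintype.ofFinite ↥T
  rw [Nat.card_eq_fintype_card]
  have := Module.card_eq_pow_finrank (K := ZMod 2) (V := ↥T)
  simpa [ZMod.card] using this

lemma char_sum {n : ℕ} (T : Submodule (ZMod 2) (Fvec n)) (u : Fvec n) :
    ∑ v : Fvec n, (if v ∈ T then sgn (dotp u v) else 0)
      = if u ∈ dualSub T then (Nat.card ↥T : ℂ) else 0 := by
  by_cases h : u ∈ dualSub T
  · rw [if_pos h]
    have : ∀ v : Fvec n, (if v ∈ T then sgn (dotp u v) else 0)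
        = (if v ∈ T then (1 : ℂ) else 0) := by
      intro v
      by_cases hv : v ∈ T
      · simp [hv, sgn, h v hv]
      · simp [hv]
    rw [Finset.sum_congr rfl fun v _ => this v]
    rw [Finset.sum_boole]
    letI : Fintype ↥T := Subtype.fintype (fun x => x ∈ T)
    rw [Nat.card_eq_fintype_card]
    have hc : Fintype.card ↥T = (Finset.univ.filter (fun x => x ∈ T)).card :=
      Fintype.card_subtype (fun x => x ∈ T)
    rw [hc]
  · rw [if_neg h]
    simp only [mem_dualSub, not_forall] at h
    obtain ⟨t₀, ht₀, hd⟩ := h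
    have hd1 : dotp u t₀ = 1 := (zmod2_cases _).resolve_left hd
    have key : ∀ v : Fvec n, (if v + t₀ ∈ T then sgn (dotp u (v + t₀)) else 0)
        = -(if v ∈ T then sgn (dotp u v) else 0) := by
      intro v
      rw [Submodule.add_mem_iff_left T ht₀, dotp_add_right, sgn_add, hd1]
      by_cases hv : v ∈ T <;> simp [hv, sgn]
    have hrei : ∑ v : Fvec n, (if v ∈ T then sgn (dotp u v) else 0)
        = ∑ v : Fvec n, (if v + t₀ ∈ T then sgn (dotp u (v + t₀)) else 0) :=
      (Fintype.sum_equiv (Equiv.addRight t₀) _ _ (fun v => rfl)).symm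
    have hS : ∑ v : Fvec n, (if v ∈ T then sgn (dotp u v) else 0)
        = -∑ v : Fvec n, (if v ∈ T then sgn (dotp u v) else 0) := by
      conv_lhs => rw [hrei, Finset.sum_congr rfl fun v _ => key v]
      simp
    linear_combination hS / 2

lemma add_add_self {n : ℕ} (v a : Fvec n) : v + a + a = v := by
  funext i
  show v i + a i + a i = v i
  rcases zmod2_cases (a i) with h | h <;>
    simp [h, add_assoc, show (1 + 1 : ZMod 2) = 0 from rfl]

lemma had_coset {n : ℕ} (T : Submodule (ZMod 2) (Fvec n)) (a : Fvec n) (u : Fvec n) :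
    Had (cosetState T a) u
      = sgn (dotp u a) *
          (if u ∈ dualSub T then (Real.sqrt (Nat.card ↥T) : ℂ) * (Real.sqrt (2 ^ n) : ℂ)⁻¹
           else 0) := by
  have hcard : (0 : ℕ) < Nat.card ↥T := Nat.card_pos
  set C : ℂ := ((Real.sqrt (Nat.card ↥T) : ℝ) : ℂ) with hC
  have hCsq : (Nat.card ↥T : ℂ) = C * C := by
    rw [hC]
    norm_cast
    rw [Real.mul_self_sqrt (by positivity)]
  have hCne : C ≠ 0 := by
    rw [hC]
    norm_cast
    positivity
  unfold Had cosetState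
  simp only [WithLp.ofLp_toLp]
  have hrei : ∑ v, sgn (dotp u v) * (if v + a ∈ T then C⁻¹ else 0)
      = ∑ v, sgn (dotp u (v + a)) * (if v ∈ T then C⁻¹ else 0) := by
    refine (Fintype.sum_equiv (Equiv.addRight a) _ _ fun v => ?_).symm
    simp only [Equiv.coe_addRight]
    simp only [add_add_self]
  rw [hrei]
  have hterm : ∀ v : Fvec n,
      sgn (dotp u (v + a)) * (if v ∈ T then C⁻¹ else 0)
      = sgn (dotp u a) * C⁻¹ * (if v ∈ T then sgn (dotp u v) else 0) := by
    intro v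
    rw [dotp_add_right, sgn_add]
    by_cases hv : v ∈ T <;> simp [hv] <;> ring
  rw [Finset.sum_congr rfl fun v _ => hterm v, ← Finset.mul_sum, char_sum]
  by_cases hu : u ∈ dualSub T
  · rw [if_pos hu, if_pos hu, hCsq]
    field_simp
  · rw [if_neg hu, if_neg hu]
    ring

lemma mem_extSpan_iff {n : ℕ} {S : Submodule (ZMod 2) (Fvec n)} {Δ : Fvec n} {u : Fvec n} :
    u ∈ extSpan S Δ ↔ u ∈ S ∨ u + Δ ∈ S := by
  constructor
  · intro hu
    rw [extSpan, Submodule.mem_sup] at hu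
    obtain ⟨s, hs, y, hy, rfl⟩ := hu
    rw [Submodule.mem_span_singleton] at hy
    obtain ⟨c, rfl⟩ := hy
    rcases zmod2_cases c with hc | hc
    · left; simpa [hc] using hs
    · right
      subst hc
      rw [one_smul, add_assoc, show Δ + Δ = 0 by simpa using add_add_self 0 Δ, add_zero]
      exact hs
  · intro hu
    rcases hu with hu | hu
    · exact Submodule.mem_sup_left hu
    · have : u = (u + Δ) + Δ := by rw [add_add_self]
      rw [this]
      exact Submodule.add_mem _ (Submodule.mem_sup_left hu)
        (Submodule.mem_sup_right (Submodule.mem_span_singleton_self Δ))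

lemma finrank_extSpan {n : ℕ} {S : Submodule (ZMod 2) (Fvec n)} {Δ : Fvec n} (hΔ : Δ ∉ S) :
    Module.finrank (ZMod 2) (extSpan S Δ) = Module.finrank (ZMod 2) S + 1 := by
  have hΔ0 : Δ ≠ 0 := fun h => hΔ (h ▸ S.zero_mem)
  have hinf : S ⊓ Submodule.span (ZMod 2) {Δ} = ⊥ := by
    rw [Submodule.eq_bot_iff]
    intro x hx
    rw [Submodule.mem_inf] at hx
    obtain ⟨hxS, hxsp⟩ := hx
    rw [Submodule.mem_span_singleton] at hxsp
    obtain ⟨c, rfl⟩ := hxsp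
    rcases zmod2_cases c with hc | hc
    · simp [hc]
    · subst hc
      rw [one_smul] at hxS
      exact absurd hxS hΔ
  have := Submodule.finrank_sup_add_finrank_inf_eq S (Submodule.span (ZMod 2) {Δ})
  rw [hinf, finrank_bot, finrank_span_singleton hΔ0] at this
  rw [extSpan]
  omega

lemma coeff_eq (k m : ℕ) (h : k + 1 ≤ m) :
    ((Real.sqrt (2 ^ (m - (k + 1))) : ℝ) : ℂ) * ((Real.sqrt (2 ^ m) : ℝ) : ℂ)⁻¹
      = ((Real.sqrt 2 : ℝ) : ℂ)⁻¹ * ((Real.sqrt (2 ^ k) : ℝ) : ℂ)⁻¹ := by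
  have hreal : Real.sqrt (2 ^ (m - (k + 1))) * (Real.sqrt (2 ^ m))⁻¹
      = (Real.sqrt 2)⁻¹ * (Real.sqrt (2 ^ k))⁻¹ := by
    have hm : (2 : ℝ) ^ m = 2 ^ (m - (k + 1)) * 2 * 2 ^ k := by
      rw [mul_assoc, ← pow_succ', ← pow_add]
      congr 1
      omega
    rw [hm, Real.sqrt_mul (by positivity), Real.sqrt_mul (by positivity)]
    have h1 : (0:ℝ) < Real.sqrt (2 ^ (m - (k+1))) := Real.sqrt_pos.mpr (by positivity)
    have h2 : (0:ℝ) < Real.sqrt 2 := Real.sqrt_pos.mpr (by positivity)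
    have h3 : (0:ℝ) < Real.sqrt (2 ^ k) := Real.sqrt_pos.mpr (by positivity)
    field_simp
  calc ((Real.sqrt (2 ^ (m - (k + 1))) : ℝ) : ℂ) * ((Real.sqrt (2 ^ m) : ℝ) : ℂ)⁻¹
      = (((Real.sqrt (2 ^ (m - (k + 1))) * (Real.sqrt (2 ^ m))⁻¹ : ℝ)) : ℂ) := by push_cast; ring
    _ = (((Real.sqrt 2)⁻¹ * (Real.sqrt (2 ^ k))⁻¹ : ℝ) : ℂ) := by rw [hreal]
    _ = ((Real.sqrt 2 : ℝ) : ℂ)⁻¹ * ((Real.sqrt (2 ^ k) : ℝ) : ℂ)⁻¹ := by push_cast; ring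

lemma Had_smul_add {n : ℕ} (α β : ℂ) (ψ φ : QSpace n) (u : Fvec n) :
    Had (α • ψ + β • φ) u = α * Had ψ u + β * Had φ u := by
  unfold Had
  simp only [WithLp.ofLp_toLp]
  have h : ∀ v : Fvec n, sgn (dotp u v) * (α • ψ + β • φ) v
      = α * (sgn (dotp u v) * ψ v) + β * (sgn (dotp u v) * φ v) := by
    intro v
    simp only [PiLp.add_apply, PiLp.smul_apply, smul_eq_mul]
    ring
  rw [Finset.sum_congr rfl fun v _ => h v, Finset.sum_add_distrib,
    ← Finset.mul_sum, ← Finset.mul_sum]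
  ring

lemma dotp_zero_right {n : ℕ} (u : Fvec n) : dotp u 0 = 0 := by simp [dotp]

lemma sgn_zero : sgn 0 = 1 := by simp [sgn]

lemma sgn_one : sgn 1 = -1 := by simp [sgn]


/-- Let `S ⊆ 𝔽₂^m` be a subspace, `Δ ∉ S`, `S_Δ := span(S, Δ)`, `Ŝ := (S_Δ)⊥`, and let
`Δ̂ ∈ S⊥ ∖ Ŝ`.  Then for all `α, β ∈ ℂ`:
`H^{⊗m}(α|Ŝ⟩ + β|Ŝ+Δ̂⟩) = ((α+β)/√2)|S⟩ + ((α−β)/√2)|S+Δ⟩`. -/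
theorem hadamard_of_dual_coset_states
    {m : ℕ} (hm : 1 ≤ m)
    (S : Submodule (ZMod 2) (Fvec m)) (Δ : Fvec m) (hΔ : Δ ∉ S)
    (Δhat : Fvec m) (hΔhat₁ : Δhat ∈ dualSub S) (hΔhat₂ : Δhat ∉ dualSub (extSpan S Δ))
    (α β : ℂ) :
    Had (α • cosetState (dualSub (extSpan S Δ)) 0 + β • cosetState (dualSub (extSpan S Δ)) Δhat)
      = ((α + β) / (Real.sqrt 2 : ℂ)) • cosetState S 0
        + ((α - β) / (Real.sqrt 2 : ℂ)) • cosetState S Δ := by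
  set SΔ := extSpan S Δ with hSΔdef
  set T := dualSub SΔ with hTdef
  set k := Module.finrank (ZMod 2) S with hk
  have hfinSΔ : Module.finrank (ZMod 2) SΔ = k + 1 := finrank_extSpan hΔ
  have hkm : k + 1 ≤ m := by
    have h1 := Submodule.finrank_le SΔ
    rw [Module.finrank_fin_fun, hfinSΔ] at h1
    exact h1
  have hcardS : Nat.card ↥S = 2 ^ k := card_submodule S
  have hfinT : Module.finrank (ZMod 2) T = m - (k + 1) := by
    have h := finrank_dualSub SΔ
    rw [← hTdef, hfinSΔ] at h
    omega
  have hcardT : Nat.card ↥T = 2 ^ (m - (k + 1)) := by rw [card_submodule, hfinT]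
  have hdd : dualSub T = SΔ := dualSub_dualSub SΔ
  have hKey : ((Real.sqrt (Nat.card ↥T) : ℝ) : ℂ) * ((Real.sqrt (2 ^ m) : ℝ) : ℂ)⁻¹
      = ((Real.sqrt 2 : ℝ) : ℂ)⁻¹ * ((Real.sqrt (Nat.card ↥S) : ℝ) : ℂ)⁻¹ := by
    rw [hcardT, hcardS]
    push_cast
    exact coeff_eq k m hkm
  have hΔΔ : dotp Δhat Δ = 1 := by
    rcases zmod2_cases (dotp Δhat Δ) with h0 | h1
    · exfalso
      apply hΔhat₂
      intro t ht
      rcases mem_extSpan_iff.mp ht with h | h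
      · exact hΔhat₁ t h
      · have heq : dotp Δhat ((t + Δ) + Δ) = dotp Δhat (t + Δ) + dotp Δhat Δ :=
          dotp_add_right _ _ _
        rw [add_add_self] at heq
        rw [heq, hΔhat₁ _ h, h0, add_zero]
    · exact h1
  ext u
  rw [Had_smul_add, had_coset, had_coset, hdd]
  simp only [PiLp.add_apply, PiLp.smul_apply, smul_eq_mul]
  unfold cosetState
  simp only [WithLp.ofLp_toLp]
  rw [dotp_zero_right, sgn_zero]
  simp only [add_zero]
  by_cases h1 : u ∈ S
  · have h2 : u + Δ ∉ S := by
      intro h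
      apply hΔ
      have hmem := S.add_mem h1 h
      have : u + (u + Δ) = Δ := by
        rw [← add_assoc, show u + u = 0 by simpa using add_add_self 0 u, zero_add]
      rwa [this] at hmem
    have hu : u ∈ SΔ := mem_extSpan_iff.mpr (Or.inl h1)
    have hd : dotp u Δhat = 0 := by rw [dotp_comm]; exact hΔhat₁ u h1
    rw [hd, sgn_zero, if_pos hu, if_pos h1, if_neg h2, hKey]
    ring
  · by_cases h2 : u + Δ ∈ S
    · have hu : u ∈ SΔ := mem_extSpan_iff.mpr (Or.inr h2)
      have hd : dotp u Δhat = 1 := by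
        rw [dotp_comm]
        have heq : dotp Δhat ((u + Δ) + Δ) = dotp Δhat (u + Δ) + dotp Δhat Δ :=
          dotp_add_right _ _ _
        rw [add_add_self] at heq
        rw [heq, hΔhat₁ _ h2, hΔΔ, zero_add]
      rw [hd, sgn_one, if_pos hu, if_neg h1, if_pos h2, hKey]
      ring
    · have hu : u ∉ SΔ := fun h => by
        rcases mem_extSpan_iff.mp h with h | h
        · exact h1 h
        · exact h2 h
      rw [if_neg hu, if_neg h1, if_neg h2]
      ring
end
end

section
/- Let m, n ≥ 1, let S ⊆ 𝔽₂^m be a subspace and Δ ∈ 𝔽₂^m ∖ S, let x = (x₁, …, x_n) and z = (z₁, …, z_n) ∈ (𝔽₂^m)ⁿ, and let ψ ∈ ℂ[𝔽₂ⁿ]. Then for every μ ∈ 𝔽₂ⁿ: ∑_{c = (c₁,…,c_n) with cᵢ ∈ S + μᵢΔ + xᵢ for all i} |⟨c| (X^{x₁}Z^{z₁} ⊗ ⋯ ⊗ X^{x_n}Z^{z_n}) E_{S,Δ}^{⊗n} ψ⟩|² = |ψ(μ)|². In words: measuring the authenticated state X^xZ^z E_{S,Δ}^{⊗n}ψ in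 the standard basis yields, with probability |ψ(μ)|², a tuple of vectors lying in the product coset ∏ᵢ (S + μᵢΔ + xᵢ), which classically decodes to μ. -/
/-!
The standard-basis case of the correctness of the publicly-verifiable authentication
scheme of "Quantum State Obfuscation from Classical Oracles": measuring the
authenticated state `X^x Z^z E_{S,Δ}^{⊗n} ψ` in the standard basis yields, with
probability `|ψ(μ)|²`, a tuple of vectors in the product coset `∏ᵢ (S + μᵢΔ + xᵢ)`,
which classically decodes to `μ`.
-/

open scoped BigOperators

noncomputable section

attribute [local instance] Classical.propDecidable

/-- The `n`-register code space `ℂ[(𝔽₂^m)ⁿ]`. -/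
abbrev QSpaceN (m n : ℕ) : Type := EuclideanSpace ℂ (Fin n → Fvec m)

/-- The authenticated (encoded-and-encrypted) state `X^x Z^z E_{S,Δ}^{⊗n} ψ`, where
`E_{S,Δ}|0⟩ = |S⟩`, `E_{S,Δ}|1⟩ = |S+Δ⟩` acts qubit-wise and `X^{x_i} Z^{z_i}` is
applied to the `i`-th register. -/
def encState {m n : ℕ} (S : Submodule (ZMod 2) (Fvec m)) (Δ : Fvec m)
    (x z : Fin n → Fvec m) (ψ : QSpace n) : QSpaceN m n :=
  WithLp.toLp 2 (fun c => ∑ μ : Fvec n, ψ μ *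
    ∏ i, (sgn (dotp (z i) (c i + x i)) * cosetState S (μ i • Δ) (c i + x i)))

lemma sgn_norm (b : ZMod 2) : ‖sgn b‖ = 1 := by
  unfold sgn; split <;> simp

/-- For every subspace `S ⊆ 𝔽₂^m`, `Δ ∉ S`, one-time-pad keys `x, z ∈ (𝔽₂^m)ⁿ`,
state `ψ ∈ ℂ[𝔽₂ⁿ]`, and outcome `μ ∈ 𝔽₂ⁿ`:
`∑_{c : ∀ i, cᵢ ∈ S + μᵢΔ + xᵢ} |⟨c| X^x Z^z E_{S,Δ}^{⊗n} ψ⟩|² = |ψ(μ)|²`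
(note `cᵢ ∈ S + μᵢΔ + xᵢ` iff `cᵢ + μᵢΔ + xᵢ ∈ S`, as we are in characteristic two). -/
theorem standard_basis_measurement_of_authenticated_state
    {m n : ℕ} (hm : 1 ≤ m) (hn : 1 ≤ n)
    (S : Submodule (ZMod 2) (Fvec m)) (Δ : Fvec m) (hΔ : Δ ∉ S)
    (x z : Fin n → Fvec m) (ψ : QSpace n) (μ : Fvec n) :
    ∑ c : Fin n → Fvec m,
      (if ∀ i, c i + (μ i • Δ) + x i ∈ S
        then ‖encState S Δ x z ψ c‖ ^ 2 else 0)
      = ‖ψ μ‖ ^ 2 := by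
  classical
  set K := Nat.card ↥S with hKdef
  have hKpos : 0 < K := Nat.card_pos
  have hself : ∀ v : Fvec m, v + v = 0 := by
    intro v; funext j
    have h2 : ∀ a : ZMod 2, a + a = 0 := by decide
    simp [h2]
  have hbit : ∀ a b : ZMod 2, a ≠ b → a + b = 1 := by decide
  set C : ℝ := ‖ψ μ‖ ^ 2 * ((K : ℝ)⁻¹) ^ n with hC
  have hval : ∀ c : Fin n → Fvec m, (∀ i, c i + (μ i • Δ) + x i ∈ S) →
      ‖encState S Δ x z ψ c‖ ^ 2 = C := by
    intro c hc
    have hcs : ∀ i, (c i + x i) + μ i • Δ ∈ S := by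
      intro i
      have h := hc i
      rwa [add_right_comm] at h
    have hsum : encState S Δ x z ψ c
        = ψ μ * ∏ i, (sgn (dotp (z i) (c i + x i)) * ((Real.sqrt K : ℂ))⁻¹) := by
      unfold encState
      rw [PiLp.toLp_apply, Finset.sum_eq_single μ]
      · congr 1
        refine Finset.prod_congr rfl fun i _ => ?_
        congr 1
        unfold cosetState
        rw [PiLp.toLp_apply, if_pos (hcs i)]
      · intro ν _ hν
        obtain ⟨i, hi⟩ : ∃ i, ν i ≠ μ i := by
          by_contra h; push_neg at h; exact hν (funext h)
        have hz0 : cosetState S (ν i • Δ) (c i + x i) = 0 := by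
          unfold cosetState
          rw [PiLp.toLp_apply, if_neg]
          intro hmem
          apply hΔ
          have hadd := S.add_mem hmem (hcs i)
          have heq : (c i + x i + ν i • Δ) + (c i + x i + μ i • Δ) = Δ := by
            have h1 : ν i + μ i = 1 := hbit _ _ hi
            have h2 : (c i + x i + ν i • Δ) + (c i + x i + μ i • Δ)
                = ((c i + x i) + (c i + x i)) + (ν i • Δ + μ i • Δ) := by abel
            rw [h2, hself, ← add_smul, h1, one_smul, zero_add]
          rwa [heq] at hadd
        rw [Finset.prod_eq_zero (Finset.mem_univ i), mul_zero]
        rw [hz0, mul_zero]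
      · intro h; exact absurd (Finset.mem_univ μ) h
    have hnorm1 : ∀ i : Fin n,
        ‖sgn (dotp (z i) (c i + x i)) * ((Real.sqrt K : ℂ))⁻¹‖ ^ 2 = (K : ℝ)⁻¹ := by
      intro i
      rw [norm_mul, sgn_norm, one_mul, norm_inv, Complex.norm_real,
        Real.norm_eq_abs, abs_of_nonneg (Real.sqrt_nonneg _), inv_pow,
        Real.sq_sqrt (by positivity)]
    rw [hsum, norm_mul, mul_pow, norm_prod]
    rw [← Finset.prod_pow, Finset.prod_congr rfl fun i _ => hnorm1 i,
      Finset.prod_const, Finset.card_univ, Fintype.card_fin, hC]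
  have hrw : ∀ c : Fin n → Fvec m,
      (if ∀ i, c i + (μ i • Δ) + x i ∈ S then ‖encState S Δ x z ψ c‖ ^ 2 else 0)
      = (if ∀ i, c i + (μ i • Δ) + x i ∈ S then C else 0) := by
    intro c
    split
    · exact hval c ‹_›
    · rfl
  rw [Finset.sum_congr rfl fun c _ => hrw c, ← Finset.sum_filter,
    Finset.sum_const]
  have hcard_i : ∀ a : Fvec m,
      (Finset.univ.filter fun v : Fvec m => v + a ∈ S).card = K := by
    intro a
    rw [← Fintype.card_subtype, hKdef, Nat.card_eq_fintype_card]
    refine Fintype.card_congr ⟨fun v => ⟨v.1 + a, v.2⟩,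
      fun s => ⟨s.1 + a, by rw [add_assoc, hself, add_zero]; exact s.2⟩,
      fun v => ?_, fun s => ?_⟩
    · apply Subtype.ext
      show (v.1 + a) + a = v.1
      rw [add_assoc, hself, add_zero]
    · apply Subtype.ext
      show (s.1 + a) + a = s.1
      rw [add_assoc, hself, add_zero]
  have hcard : (Finset.univ.filter fun c : Fin n → Fvec m =>
      ∀ i, c i + (μ i • Δ) + x i ∈ S).card = K ^ n := by
    have hpi : (Finset.univ.filter fun c : Fin n → Fvec m =>
        ∀ i, c i + (μ i • Δ) + x i ∈ S)
        = Fintype.piFinset fun i =>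
            (Finset.univ.filter fun v : Fvec m => v + (μ i • Δ + x i) ∈ S) := by
      ext c
      simp [Fintype.mem_piFinset, add_assoc]
    rw [hpi, Fintype.card_piFinset]
    simp [hcard_i]
  rw [hcard, nsmul_eq_mul, hC]
  push_cast
  have hKne : ((K : ℝ)) ≠ 0 := by positivity
  field_simp
  rw [one_div, inv_pow, mul_comm, ← mul_assoc, inv_mul_cancel₀ (pow_ne_zero _ hKne), one_mul]
end
end
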